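/- Let G: Ω × Ω → ℝ be a symmetric positive-semidefinite integrable kernel with |G(x,y)| ≤ C(−Γ(|x−y|) + 1) for some constant C, where Γ is the fundamental solution of the Laplacian (n ≥ 3). Then for all measurable E, F ⊆ Ω with |E| = |F|, NL(F) − NL(E) ≤ 2C(‖Γ * χ_F‖_{L∞(E △ F)} + |F|) · |E △ F|. -/

import Mathlib

open MeasureTheory Metric
open scoped symmDiff

noncomputable def omegaN (n : ℕ) : ℝ :=
  (volume (ball (0 : EuclideanSpace ℝ (Fin n)) 1)).toReal

noncomputable def fundSol (n : ℕ) (t : ℝ) : ℝ :=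
  t ^ ((2 : ℝ) - n) / (n * ((2 : ℝ) - n) * omegaN n)

noncomputable def NL {n : ℕ} (Ω : Set (EuclideanSpace ℝ (Fin n)))
    (G : EuclideanSpace ℝ (Fin n) → EuclideanSpace ℝ (Fin n) → ℝ)
    (E : Set (EuclideanSpace ℝ (Fin n))) : ℝ :=
  ∫ x in Ω, ∫ y in Ω, G x y * E.indicator 1 x * E.indicator 1 y

lemma riesz_integrableOn_ball {n : ℕ} (hn : 3 ≤ n) (R : ℝ) :
    IntegrableOn (fun z : EuclideanSpace ℝ (Fin n) => ‖z‖ ^ ((2:ℝ) - n)) (ball 0 R) volume := by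
  rcases le_or_gt R 0 with hR | hR
  · rw [ball_eq_empty.2 hR]; exact integrableOn_empty
  set s : ℝ := (2:ℝ) - n with hs_def
  have hn3 : (3:ℝ) ≤ (n:ℝ) := by exact_mod_cast hn
  have hs_neg : s < 0 := by simp only [hs_def]; linarith
  have hmeas : Measurable (fun z : EuclideanSpace ℝ (Fin n) => ‖z‖ ^ s) :=
    measurable_norm.pow measurable_const
  haveI : Nonempty (Fin n) := ⟨⟨0, by omega⟩⟩
  haveI : Nontrivial (EuclideanSpace ℝ (Fin n)) := inferInstance
  refine ⟨hmeas.aestronglyMeasurable, ?_⟩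
  rw [hasFiniteIntegral_iff_ofReal ?nonneg]
  case nonneg =>
    exact Filter.Eventually.of_forall fun z => Real.rpow_nonneg (norm_nonneg _) _
  set A : ℕ → Set (EuclideanSpace ℝ (Fin n)) :=
    fun k => ball 0 (R / 2 ^ k) \ ball 0 (R / 2 ^ (k + 1)) with hA_def
  have hcover : ball (0 : EuclideanSpace ℝ (Fin n)) R ⊆ {0} ∪ ⋃ k, A k := by
    intro z hz
    rcases eq_or_ne z 0 with rfl | hz0
    · exact Or.inl rfl
    · right
      have hznorm : 0 < ‖z‖ := norm_pos_iff.2 hz0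
      have hex : ∃ k : ℕ, R / 2 ^ (k + 1) ≤ ‖z‖ := by
        obtain ⟨k, hk⟩ := pow_unbounded_of_one_lt (R / ‖z‖) (one_lt_two (α := ℝ))
        refine ⟨k, ?_⟩
        have h2 : (R / ‖z‖) < 2 ^ (k + 1) :=
          hk.trans_le (pow_le_pow_right₀ one_le_two (Nat.le_succ k))
        rw [div_le_iff₀ (by positivity)]
        rw [div_lt_iff₀ hznorm] at h2
        nlinarith [hznorm, (pow_pos (zero_lt_two (α := ℝ)) (k+1))]
      classical
      refine Set.mem_iUnion.2 ⟨Nat.find hex, ?_, ?_⟩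
      · rw [mem_ball_zero_iff]
        rcases Nat.eq_zero_or_pos (Nat.find hex) with hk0 | hkpos
        · rw [hk0]; simpa using (mem_ball_zero_iff.1 hz)
        · have hlt : Nat.find hex - 1 < Nat.find hex := Nat.sub_lt hkpos one_pos
          have hmin := Nat.find_min hex hlt
          push_neg at hmin
          have heq : Nat.find hex - 1 + 1 = Nat.find hex := Nat.succ_pred_eq_of_pos hkpos
          rwa [heq] at hmin
      · intro hmem
        exact absurd (mem_ball_zero_iff.1 hmem) (not_lt.2 (Nat.find_spec hex))
  have hAmeas : ∀ k, MeasurableSet (A k) := fun k =>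
    measurableSet_ball.diff measurableSet_ball
  calc ∫⁻ z in ball 0 R, ENNReal.ofReal (‖z‖ ^ s) ∂volume
      ≤ ∫⁻ z in {0} ∪ ⋃ k, A k, ENNReal.ofReal (‖z‖ ^ s) ∂volume :=
        lintegral_mono_set hcover
    _ ≤ (∫⁻ z in ({0} : Set _), ENNReal.ofReal (‖z‖ ^ s) ∂volume)
        + ∫⁻ z in ⋃ k, A k, ENNReal.ofReal (‖z‖ ^ s) ∂volume := lintegral_union_le _ _ _
    _ ≤ 0 + ∑' k, ∫⁻ z in A k, ENNReal.ofReal (‖z‖ ^ s) ∂volume := by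
        gcongr
        · rw [setLIntegral_measure_zero _ _ (measure_singleton 0)]
        · exact lintegral_iUnion_le _ _
    _ < ⊤ := by
        rw [zero_add]
        have hterm : ∀ k, ∫⁻ z in A k, ENNReal.ofReal (‖z‖ ^ s) ∂volume
            ≤ ENNReal.ofReal ((R / 2 ^ (k+1)) ^ s * (R / 2 ^ k) ^ n)
              * volume (ball (0 : EuclideanSpace ℝ (Fin n)) 1) := by
          intro k
          have h1 : ∫⁻ z in A k, ENNReal.ofReal (‖z‖ ^ s) ∂volume
              ≤ ∫⁻ _ in A k, ENNReal.ofReal ((R / 2 ^ (k+1)) ^ s) ∂volume := by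
            refine setLIntegral_mono' (hAmeas k) fun z hz => ?_
            refine ENNReal.ofReal_le_ofReal ?_
            have hz2 : R / 2 ^ (k + 1) ≤ ‖z‖ := by
              have := hz.2
              rw [mem_ball_zero_iff, not_lt] at this
              exact this
            exact Real.rpow_le_rpow_of_nonpos (by positivity) hz2 hs_neg.le
          have h2 : volume (A k) ≤ ENNReal.ofReal ((R / 2 ^ k) ^ n)
              * volume (ball (0 : EuclideanSpace ℝ (Fin n)) 1) := by
            calc volume (A k) ≤ volume (ball (0 : EuclideanSpace ℝ (Fin n)) (R / 2 ^ k)) :=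
                  measure_mono Set.diff_subset
              _ = ENNReal.ofReal ((R / 2 ^ k) ^ Module.finrank ℝ (EuclideanSpace ℝ (Fin n)))
                    * volume (ball (0 : EuclideanSpace ℝ (Fin n)) 1) :=
                  Measure.addHaar_ball_of_pos volume 0 (by positivity)
              _ = ENNReal.ofReal ((R / 2 ^ k) ^ n)
                    * volume (ball (0 : EuclideanSpace ℝ (Fin n)) 1) := by
                  rw [finrank_euclideanSpace_fin]
          calc ∫⁻ z in A k, ENNReal.ofReal (‖z‖ ^ s) ∂volume
              ≤ ∫⁻ _ in A k, ENNReal.ofReal ((R / 2 ^ (k+1)) ^ s) ∂volume := h1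
            _ = ENNReal.ofReal ((R / 2 ^ (k+1)) ^ s) * volume (A k) := by
                rw [setLIntegral_const]
            _ ≤ ENNReal.ofReal ((R / 2 ^ (k+1)) ^ s)
                * (ENNReal.ofReal ((R / 2 ^ k) ^ n)
                  * volume (ball (0 : EuclideanSpace ℝ (Fin n)) 1)) :=
                mul_le_mul_right h2 _
            _ = ENNReal.ofReal ((R / 2 ^ (k+1)) ^ s * (R / 2 ^ k) ^ n)
                * volume (ball (0 : EuclideanSpace ℝ (Fin n)) 1) := by
                rw [ENNReal.ofReal_mul (Real.rpow_nonneg (by positivity) _), mul_assoc]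
        have hgeom : ∀ k : ℕ, (R / 2 ^ (k+1)) ^ s * ((R / 2 ^ k) ^ n : ℝ)
            = ((R / 2) ^ s * R ^ n) * (4⁻¹ : ℝ) ^ k := by
          intro k
          induction k with
          | zero => simp
          | succ m ih =>
            have e1 : R / 2 ^ (m + 2) = (R / 2 ^ (m+1)) * 2⁻¹ := by ring
            have e2 : R / 2 ^ (m + 1) = (R / 2 ^ m) * 2⁻¹ := by ring
            have h2s : ((R / 2 ^ (m+1)) * 2⁻¹ : ℝ) ^ s
                = (R / 2 ^ (m+1)) ^ s * (2⁻¹ : ℝ) ^ s :=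
              Real.mul_rpow (by positivity) (by norm_num)
            have hhalf : ((2:ℝ)⁻¹) ^ s * ((2:ℝ)⁻¹) ^ (n:ℕ) = (4⁻¹ : ℝ) := by
              have : ((2:ℝ)⁻¹) ^ (n:ℕ) = ((2:ℝ)⁻¹) ^ ((n:ℝ)) := by
                rw [Real.rpow_natCast]
              rw [this, ← Real.rpow_add (by norm_num)]
              have hsn : s + (n:ℝ) = 2 := by simp [hs_def]
              rw [hsn]
              norm_num
            calc (R / 2 ^ (m + 1 + 1)) ^ s * (R / 2 ^ (m+1)) ^ n
                = ((R / 2 ^ (m+1)) * 2⁻¹) ^ s * ((R / 2 ^ m) * 2⁻¹) ^ n := by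
                  rw [← e2]; norm_num [e1]
              _ = ((R / 2 ^ (m+1)) ^ s * (R / 2 ^ m) ^ n) * (((2:ℝ)⁻¹) ^ s * ((2:ℝ)⁻¹) ^ (n:ℕ)) := by
                  rw [h2s, mul_pow]; ring
              _ = (((R / 2) ^ s * R ^ n) * (4⁻¹ : ℝ) ^ m) * (4⁻¹ : ℝ) := by rw [ih, hhalf]
              _ = ((R / 2) ^ s * R ^ n) * (4⁻¹ : ℝ) ^ (m + 1) := by ring
        calc (∑' k, ∫⁻ z in A k, ENNReal.ofReal (‖z‖ ^ s) ∂volume)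
            ≤ ∑' k, ENNReal.ofReal (((R / 2) ^ s * R ^ n) * (4⁻¹:ℝ) ^ k)
                * volume (ball (0 : EuclideanSpace ℝ (Fin n)) 1) := by
              refine ENNReal.tsum_le_tsum fun k => ?_
              rw [← hgeom k]; exact hterm k
          _ = (ENNReal.ofReal ((R / 2) ^ s * R ^ n) * volume (ball (0:EuclideanSpace ℝ (Fin n)) 1))
                * ∑' k, (ENNReal.ofReal (4⁻¹:ℝ)) ^ k := by
              rw [← ENNReal.tsum_mul_left]
              congr 1 with k
              rw [ENNReal.ofReal_mul (by positivity), ENNReal.ofReal_pow (by norm_num)]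
              ring
          _ < ⊤ := by
              refine ENNReal.mul_lt_top (ENNReal.mul_lt_top ENNReal.ofReal_lt_top
                measure_ball_lt_top) ?_
              rw [ENNReal.tsum_geometric]
              refine ENNReal.inv_lt_top.2 ?_
              rw [tsub_pos_iff_lt]
              exact ENNReal.ofReal_lt_one.2 (by norm_num)

lemma riesz_integrableOn_ball' {n : ℕ} (hn : 3 ≤ n) (x : EuclideanSpace ℝ (Fin n)) (R : ℝ) :
    IntegrableOn (fun y => ‖x - y‖ ^ ((2:ℝ) - n)) (ball x R) volume := by
  have hmp : MeasurePreserving (fun y : EuclideanSpace ℝ (Fin n) => x - y) volume volume :=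
    Measure.measurePreserving_sub_left volume x
  have hemb : MeasurableEmbedding (fun y : EuclideanSpace ℝ (Fin n) => x - y) :=
    (MeasurableEquiv.subLeft x).measurableEmbedding
  have hpre : (fun y : EuclideanSpace ℝ (Fin n) => x - y) ⁻¹' (ball 0 R) = ball x R := by
    ext y
    simp [mem_ball, dist_eq_norm, norm_sub_rev]
  have := (hmp.integrableOn_comp_preimage hemb
    (f := fun z : EuclideanSpace ℝ (Fin n) => ‖z‖ ^ ((2:ℝ) - n)) (s := ball 0 R)).2
    (riesz_integrableOn_ball hn R)
  rw [hpre] at this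
  exact this

/-- Lipschitz estimate for the nonlocal term: if `|G(x,y)| ≤ C(−Γ(|x−y|)+1)`, then for sets of
equal volume, `NL(F) − NL(E) ≤ 2C(‖Γ * χ_F‖_{L∞(E △ F)} + |F|)|E △ F|`, where `M` is any
pointwise bound for `|Γ * χ_F|` on `E △ F`. -/
theorem NL_lipschitz_estimate {n : ℕ} (hn : 3 ≤ n)
    (Ω : Set (EuclideanSpace ℝ (Fin n)))
    (hΩ : MeasurableSet Ω) (hΩb : Bornology.IsBounded Ω)
    (G : EuclideanSpace ℝ (Fin n) → EuclideanSpace ℝ (Fin n) → ℝ)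
    (hGmeas : Measurable (Function.uncurry G))
    (hGsym : ∀ x y, G x y = G y x)
    (hGint : IntegrableOn (Function.uncurry G) (Ω ×ˢ Ω) (volume.prod volume))
    (hGpos : ∀ f : EuclideanSpace ℝ (Fin n) → ℝ, Measurable f →
      (∃ C₀ : ℝ, ∀ x, |f x| ≤ C₀) →
      0 ≤ ∫ x in Ω, ∫ y in Ω, G x y * f x * f y)
    (C : ℝ) (hC : 0 < C)
    (hGbound : ∀ x ∈ Ω, ∀ y ∈ Ω, |G x y| ≤ C * (-(fundSol n ‖x - y‖) + 1))
    (E F : Set (EuclideanSpace ℝ (Fin n)))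
    (hE : MeasurableSet E) (hF : MeasurableSet F)
    (hEΩ : E ⊆ Ω) (hFΩ : F ⊆ Ω)
    (hvol : volume E = volume F)
    (M : ℝ) (hM : ∀ x ∈ E ∆ F, |∫ y in F, fundSol n ‖x - y‖| ≤ M) :
    NL Ω G F - NL Ω G E ≤
      2 * C * (M + (volume F).toReal) * (volume (E ∆ F)).toReal := by
  classical
  by_cases hEeqF : E = F
  · simp [hEeqF, symmDiff_self, NL]
  set μ : Measure (EuclideanSpace ℝ (Fin n)) := volume.restrict Ω with hμ
  set χE : EuclideanSpace ℝ (Fin n) → ℝ := E.indicator 1 with hχE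
  set χF : EuclideanSpace ℝ (Fin n) → ℝ := F.indicator 1 with hχF
  set u : EuclideanSpace ℝ (Fin n) → ℝ := fun x => χF x - χE x with hu
  have hmχE : Measurable χE := measurable_one.indicator hE
  have hmχF : Measurable χF := measurable_one.indicator hF
  have hmu : Measurable u := hmχF.sub hmχE
  have hχE01 : ∀ x, 0 ≤ χE x ∧ χE x ≤ 1 := by
    intro x
    by_cases hx : x ∈ E <;> simp [hχE, Set.indicator_apply, hx]
  have hχF01 : ∀ x, 0 ≤ χF x ∧ χF x ≤ 1 := by
    intro x
    by_cases hx : x ∈ F <;> simp [hχF, Set.indicator_apply, hx]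
  have hχFabs : ∀ x, |χF x| ≤ 1 := fun x =>
    abs_le.2 ⟨by linarith [(hχF01 x).1], (hχF01 x).2⟩
  have huabs : ∀ x, |u x| ≤ 1 := by
    intro x
    rw [hu]
    have h1 := hχE01 x
    have h2 := hχF01 x
    rw [abs_le]
    constructor <;> simp only <;> linarith
  have hu_zero : ∀ x, x ∉ E ∆ F → u x = 0 := by
    intro x hx
    rw [Set.mem_symmDiff] at hx
    push_neg at hx
    by_cases hxE : x ∈ E
    · have hxF : x ∈ F := by tauto
      simp [hu, hχE, hχF, Set.indicator_of_mem, hxE, hxF]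
    · have hxF : x ∉ F := by tauto
      simp [hu, hχE, hχF, Set.indicator_of_notMem, hxE, hxF]
  -- integrability of products
  have prodInt : ∀ f g : EuclideanSpace ℝ (Fin n) → ℝ, Measurable f → Measurable g →
      (∀ x, |f x| ≤ 1) → (∀ x, |g x| ≤ 1) →
      Integrable (fun p : EuclideanSpace ℝ (Fin n) × EuclideanSpace ℝ (Fin n) => G p.1 p.2 * f p.1 * g p.2) (μ.prod μ) := by
    intro f g hf hg hfb hgb
    rw [hμ, Measure.prod_restrict]
    refine Integrable.mono hGint
      (((hGmeas.mul (hf.comp measurable_fst)).mul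
        (hg.comp measurable_snd)).aestronglyMeasurable) ?_
    refine Filter.Eventually.of_forall fun p => ?_
    simp only [Real.norm_eq_abs, Function.uncurry]
    have h1 : |G p.1 p.2 * f p.1 * g p.2| = |G p.1 p.2| * |f p.1| * |g p.2| := by
      rw [abs_mul, abs_mul]
    rw [h1, mul_assoc]
    have hfg : |f p.1| * |g p.2| ≤ 1 := by
      have h2 := abs_nonneg (g p.2)
      have h3 := abs_nonneg (f p.1)
      nlinarith [hfb p.1, hgb p.2]
    calc |G p.1 p.2| * (|f p.1| * |g p.2|)
        ≤ |G p.1 p.2| * 1 := mul_le_mul_of_nonneg_left hfg (abs_nonneg _)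
      _ = |G p.1 p.2| := mul_one _
  have hI1 : Integrable (fun p : EuclideanSpace ℝ (Fin n) × EuclideanSpace ℝ (Fin n) => G p.1 p.2 * χF p.1 * χF p.2) (μ.prod μ) :=
    prodInt _ _ hmχF hmχF hχFabs hχFabs
  have hχEabs : ∀ x, |χE x| ≤ 1 := fun x =>
    abs_le.2 ⟨by linarith [(hχE01 x).1], (hχE01 x).2⟩
  have hI2 : Integrable (fun p : EuclideanSpace ℝ (Fin n) × EuclideanSpace ℝ (Fin n) => G p.1 p.2 * χE p.1 * χE p.2) (μ.prod μ) :=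
    prodInt _ _ hmχE hmχE hχEabs hχEabs
  have hI3 : Integrable (fun p : EuclideanSpace ℝ (Fin n) × EuclideanSpace ℝ (Fin n) => G p.1 p.2 * u p.1 * χF p.2) (μ.prod μ) :=
    prodInt _ _ hmu hmχF huabs hχFabs
  have hI4 : Integrable (fun p : EuclideanSpace ℝ (Fin n) × EuclideanSpace ℝ (Fin n) => G p.1 p.2 * χF p.1 * u p.2) (μ.prod μ) :=
    prodInt _ _ hmχF hmu hχFabs huabs
  have hI5 : Integrable (fun p : EuclideanSpace ℝ (Fin n) × EuclideanSpace ℝ (Fin n) => G p.1 p.2 * u p.1 * u p.2) (μ.prod μ) :=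
    prodInt _ _ hmu hmu huabs huabs
  -- NL as product integrals
  have hNLF : NL Ω G F = ∫ p : EuclideanSpace ℝ (Fin n) × EuclideanSpace ℝ (Fin n), G p.1 p.2 * χF p.1 * χF p.2 ∂(μ.prod μ) := by
    unfold NL
    exact integral_integral hI1
  have hNLE : NL Ω G E = ∫ p : EuclideanSpace ℝ (Fin n) × EuclideanSpace ℝ (Fin n), G p.1 p.2 * χE p.1 * χE p.2 ∂(μ.prod μ) := by
    unfold NL
    exact integral_integral hI2
  -- expansion
  have hsplit : NL Ω G F - NL Ω G E
      = (∫ p : EuclideanSpace ℝ (Fin n) × EuclideanSpace ℝ (Fin n), G p.1 p.2 * u p.1 * χF p.2 ∂(μ.prod μ))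
        + (∫ p : EuclideanSpace ℝ (Fin n) × EuclideanSpace ℝ (Fin n), G p.1 p.2 * χF p.1 * u p.2 ∂(μ.prod μ))
        - ∫ p : EuclideanSpace ℝ (Fin n) × EuclideanSpace ℝ (Fin n), G p.1 p.2 * u p.1 * u p.2 ∂(μ.prod μ) := by
    have hI34 : Integrable (fun p : EuclideanSpace ℝ (Fin n) × EuclideanSpace ℝ (Fin n) =>
        G p.1 p.2 * u p.1 * χF p.2 + G p.1 p.2 * χF p.1 * u p.2) (μ.prod μ) := by
      exact hI3.add hI4
    have key : (fun p : EuclideanSpace ℝ (Fin n) × EuclideanSpace ℝ (Fin n) =>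
          G p.1 p.2 * χF p.1 * χF p.2 - G p.1 p.2 * χE p.1 * χE p.2)
        = fun p => (G p.1 p.2 * u p.1 * χF p.2 + G p.1 p.2 * χF p.1 * u p.2)
            - G p.1 p.2 * u p.1 * u p.2 := by
      funext p
      simp only [hu]
      ring
    rw [hNLF, hNLE, ← integral_sub hI1 hI2, key, integral_sub hI34 hI5,
      integral_add hI3 hI4]
  -- positivity of the quadratic term
  have hQ : 0 ≤ ∫ p : EuclideanSpace ℝ (Fin n) × EuclideanSpace ℝ (Fin n), G p.1 p.2 * u p.1 * u p.2 ∂(μ.prod μ) := by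
    have h := hGpos u hmu ⟨1, huabs⟩
    rwa [integral_integral hI5] at h
  -- swap
  have hswap : (∫ p : EuclideanSpace ℝ (Fin n) × EuclideanSpace ℝ (Fin n), G p.1 p.2 * χF p.1 * u p.2 ∂(μ.prod μ))
      = ∫ p : EuclideanSpace ℝ (Fin n) × EuclideanSpace ℝ (Fin n), G p.1 p.2 * u p.1 * χF p.2 ∂(μ.prod μ) := by
    rw [← integral_prod_swap (fun p : EuclideanSpace ℝ (Fin n) × EuclideanSpace ℝ (Fin n) => G p.1 p.2 * χF p.1 * u p.2)]
    refine integral_congr_ae (Filter.Eventually.of_forall fun p => ?_)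
    simp only [Prod.fst_swap, Prod.snd_swap]
    rw [hGsym p.2 p.1]
    ring
  -- symmetric difference facts
  have hEFmeas : MeasurableSet (E ∆ F) := hE.symmDiff hF
  have hEFsub : E ∆ F ⊆ Ω := by
    intro x hx
    rcases Set.mem_symmDiff.1 hx with ⟨hx1, _⟩ | ⟨hx1, _⟩
    · exact hEΩ hx1
    · exact hFΩ hx1
  obtain ⟨x₀, hx₀⟩ : (E ∆ F).Nonempty := by
    rw [Set.nonempty_iff_ne_empty]
    intro h
    exact hEeqF (symmDiff_eq_bot.1 h)
  have hM0 : 0 ≤ M := (abs_nonneg _).trans (hM x₀ hx₀)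
  set K : ℝ := C * (M + (volume F).toReal) with hK
  have hK0 : 0 ≤ K := mul_nonneg hC.le (add_nonneg hM0 ENNReal.toReal_nonneg)
  have hΩvol : volume Ω < ⊤ := hΩb.measure_lt_top
  have hFvol : volume F < ⊤ := lt_of_le_of_lt (measure_mono hFΩ) hΩvol
  -- pointwise bound on the inner integral
  have hx_bound : ∀ x, |∫ y, G x y * u x * χF y ∂μ|
      ≤ K * (E ∆ F).indicator (fun _ => (1:ℝ)) x := by
    intro x
    by_cases hxEF : x ∈ E ∆ F
    · have hxΩ : x ∈ Ω := hEFsub hxEF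
      rw [Set.indicator_of_mem hxEF, mul_one]
      have hrw : (∫ y, G x y * u x * χF y ∂μ) = u x * ∫ y in F, G x y := by
        have hfun : (fun y => G x y * u x * χF y)
            = fun y => u x * (F.indicator (fun y => G x y) y) := by
          funext y
          by_cases hy : y ∈ F
          · simp only [hχF, Set.indicator_of_mem hy, Pi.one_apply]
            ring
          · simp [hχF, Set.indicator_of_notMem hy]
        rw [hμ, hfun, integral_const_mul, setIntegral_indicator hF,
          Set.inter_eq_self_of_subset_right hFΩ]
      rw [hrw, abs_mul]
      have h2 : |∫ y in F, G x y| ≤ K := by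
        by_cases hint : IntegrableOn (fun y => G x y) F volume
        · obtain ⟨R, hR⟩ := hΩb.subset_ball x
          have hFball : F ⊆ ball x (max R 1) := fun y hy =>
            ball_subset_ball (le_max_left R 1) (hR (hFΩ hy))
          have hΓint : IntegrableOn (fun y => fundSol n ‖x - y‖) F volume := by
            have h := (riesz_integrableOn_ball' hn x (max R 1)).mono_set hFball
            have : (fun y : EuclideanSpace ℝ (Fin n) => fundSol n ‖x - y‖)
                = fun y : EuclideanSpace ℝ (Fin n) => ‖x - y‖ ^ ((2:ℝ) - n) / (n * ((2:ℝ) - n) * omegaN n) := by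
              funext y; rw [fundSol]
            rw [this]
            exact h.div_const _
          have hconst : IntegrableOn (fun _ : EuclideanSpace ℝ (Fin n) => (1:ℝ)) F volume := by
            rw [integrableOn_const_iff]
            exact Or.inr hFvol
          have hbound_int : IntegrableOn (fun y => C * (-(fundSol n ‖x - y‖) + 1)) F volume :=
            (hΓint.neg.add hconst).const_mul C
          have habs : |∫ y in F, G x y| ≤ ∫ y in F, |G x y| := by
            simpa [Real.norm_eq_abs] using
              norm_integral_le_integral_norm (μ := volume.restrict F) (fun y => G x y)
          refine habs.trans ?_
          have hstep : (∫ y in F, |G x y|)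
              ≤ ∫ y in F, C * (-(fundSol n ‖x - y‖) + 1) :=
            setIntegral_mono_on hint.abs hbound_int hF
              (fun y hy => hGbound x hxΩ y (hFΩ hy))
          refine hstep.trans ?_
          have hval : (∫ y in F, C * (-(fundSol n ‖x - y‖) + 1))
              = C * ((-∫ y in F, fundSol n ‖x - y‖) + (volume F).toReal) := by
            have hnegint : IntegrableOn (fun y => -(fundSol n ‖x - y‖)) F volume := by
              exact hΓint.neg
            rw [integral_const_mul, integral_add hnegint hconst, integral_neg]
            simp [setIntegral_const, measureReal_def]
          rw [hval, hK]
          have hMx : -(∫ y in F, fundSol n ‖x - y‖) ≤ M :=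
            (neg_le_abs _).trans (hM x hxEF)
          have : (-∫ y in F, fundSol n ‖x - y‖) + (volume F).toReal
              ≤ M + (volume F).toReal := by linarith
          exact mul_le_mul_of_nonneg_left this hC.le
        · rw [integral_undef hint]
          simpa using hK0
      calc |u x| * |∫ y in F, G x y| ≤ 1 * K :=
            mul_le_mul (huabs x) h2 (abs_nonneg _) zero_le_one
        _ = K := one_mul K
    · rw [Set.indicator_of_notMem hxEF, mul_zero]
      simp [hu_zero x hxEF]
  -- integrability of inner integral and bound
  have hinner_int : Integrable (fun x => ∫ y, G x y * u x * χF y ∂μ) μ := by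
    have h := hI3.integral_prod_left
    simpa using h
  have hbnd_int : Integrable (fun x => K * (E ∆ F).indicator (fun _ => (1:ℝ)) x) μ := by
    refine Integrable.const_mul ?_ K
    rw [integrable_indicator_iff hEFmeas]
    rw [integrableOn_const_iff]
    right
    calc μ (E ∆ F) ≤ volume (E ∆ F) := by
          rw [hμ]; exact Measure.restrict_le_self _
      _ ≤ volume Ω := measure_mono hEFsub
      _ < ⊤ := hΩvol
  have hI3bound : (∫ p : EuclideanSpace ℝ (Fin n) × EuclideanSpace ℝ (Fin n), G p.1 p.2 * u p.1 * χF p.2 ∂(μ.prod μ))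
      ≤ K * (volume (E ∆ F)).toReal := by
    have h1 : (∫ p : EuclideanSpace ℝ (Fin n) × EuclideanSpace ℝ (Fin n), G p.1 p.2 * u p.1 * χF p.2 ∂(μ.prod μ))
        = ∫ x, (∫ y, G x y * u x * χF y ∂μ) ∂μ := by
      exact (integral_integral (f := fun x y => G x y * u x * χF y) hI3).symm
    rw [h1]
    have h2 : (∫ x, (∫ y, G x y * u x * χF y ∂μ) ∂μ)
        ≤ ∫ x, K * (E ∆ F).indicator (fun _ => (1:ℝ)) x ∂μ :=
      integral_mono hinner_int hbnd_int
        (fun x => (le_abs_self _).trans (hx_bound x))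
    refine h2.trans ?_
    rw [integral_const_mul, integral_indicator_const (1:ℝ) hEFmeas]
    rw [hμ, measureReal_def, Measure.restrict_apply hEFmeas, Set.inter_eq_self_of_subset_left hEFsub]
    simp
  -- conclusion
  have hfinal : NL Ω G F - NL Ω G E ≤ 2 * (K * (volume (E ∆ F)).toReal) := by
    rw [hsplit, hswap]
    linarith [hI3bound, hQ]
  calc NL Ω G F - NL Ω G E ≤ 2 * (K * (volume (E ∆ F)).toReal) := hfinal
    _ = 2 * C * (M + (volume F).toReal) * (volume (E ∆ F)).toReal := by rw [hK]; ring
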